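/- Let H ∈ {0,1}^{m×n} ⊆ ℤ^{m×n}, m < n, and S a size-(m+1) subset of columns. The perm-vector ω based on S, defined by ω_i = perm_ℤ(H_{S∖i}) for i ∈ S and ω_i = 0 otherwise, lies in the fundamental cone of H: ω_i ≥ 0 for all i, and for all rows j and all i with h_{j,i}=1, ω_i ≤ Σ_{i'≠i, h_{j,i'}=1} ω_{i'}. -/

import Mathlib

open Matrix BigOperators

/-- The perm-vector of `H` based on a size-`(m+1)` column subset `S`:
`ω i = perm(H_{S∖i})` for `i ∈ S`, and `0` otherwise. -/
def permVec {m n : ℕ} (H : Matrix (Fin m) (Fin n) ℤ) (S : Finset (Fin n))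
    (hS : S.card = m + 1) : Fin n → ℤ :=
  fun i =>
    if hi : i ∈ S then
      (H.submatrix id (fun k =>
          (((S.erase i).orderIsoOfFin
            (by simp [Finset.card_erase_of_mem hi, hS]) k : Fin n)))).permanent
    else 0

/-- The fundamental cone of a 0-1 integer matrix `H`, as a subset of `ℝⁿ`. -/
def inFundCone {m n : ℕ} (H : Matrix (Fin m) (Fin n) ℤ) (ω : Fin n → ℝ) : Prop :=
  (∀ i, 0 ≤ ω i) ∧
  ∀ (j : Fin m) (i : Fin n), H j i = 1 →
    ω i ≤ ∑ i' ∈ (Finset.univ.filter fun i' => H j i' = 1).erase i, ω i'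

/-- The weight of a column-selection function: the product of the selected entries. -/
def pw {m n : ℕ} (H : Matrix (Fin m) (Fin n) ℤ) (f : Fin m → Fin n) : ℤ :=
  ∏ j, H j (f j)

/-- The set of injections `Fin m → Fin n` whose range is contained in `S.erase i`. -/
def Bset {m n : ℕ} (S : Finset (Fin n)) (i : Fin n) : Finset (Fin m → Fin n) :=
  Finset.univ.filter fun f => Function.Injective f ∧ ∀ j, f j ∈ S.erase i

lemma pw_nonneg {m n : ℕ} {H : Matrix (Fin m) (Fin n) ℤ}
    (hH : ∀ j i, H j i = 0 ∨ H j i = 1) (f : Fin m → Fin n) : 0 ≤ pw H f :=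
  Finset.prod_nonneg fun j _ => by rcases hH j (f j) with h | h <;> simp [h]

lemma permVec_eq_sum {m n : ℕ} (H : Matrix (Fin m) (Fin n) ℤ) (S : Finset (Fin n))
    (hS : S.card = m + 1) {i : Fin n} (hi : i ∈ S) :
    permVec H S hS i = ∑ f ∈ Bset S i, pw H f := by
  have hc : (S.erase i).card = m := by simp [Finset.card_erase_of_mem hi, hS]
  set e := (S.erase i).orderIsoOfFin hc with he
  set c : Fin m → Fin n := fun k => (e k : Fin n) with hcdef
  have hcinj : Function.Injective c := fun a b h => e.injective (Subtype.ext h)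
  have hmem : ∀ k, c k ∈ S.erase i := fun k => (e k).2
  -- the Bset is the image of permutations
  have himg : Bset S i = Finset.univ.image (fun σ : Equiv.Perm (Fin m) => c ∘ σ) := by
    ext f
    simp only [Bset, Finset.mem_filter, Finset.mem_univ, true_and, Finset.mem_image]
    constructor
    · rintro ⟨hfinj, hfmem⟩
      have hcard : Fintype.card (↥(S.erase i)) = m := by
        rw [Fintype.card_coe, hc]
      set g : Fin m → ↥(S.erase i) := fun j => ⟨f j, hfmem j⟩ with hg
      have hginj : Function.Injective g := fun a b h => hfinj (congrArg Subtype.val h)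
      have hgbij : Function.Bijective g :=
        (Fintype.bijective_iff_injective_and_card g).2
          ⟨hginj, by rw [Fintype.card_fin, hcard]⟩
      refine ⟨(Equiv.ofBijective g hgbij).trans e.toEquiv.symm, ?_⟩
      funext j
      simp [c, Equiv.trans, Function.comp, g]
    · rintro ⟨σ, rfl⟩
      exact ⟨hcinj.comp σ.injective, fun j => hmem (σ j)⟩
  have hperminj : ∀ x ∈ (Finset.univ : Finset (Equiv.Perm (Fin m))), ∀ y ∈ Finset.univ,
      c ∘ ⇑x = c ∘ ⇑(y : Equiv.Perm (Fin m)) → x = y :=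
    fun σ _ τ _ h => Equiv.ext fun j => hcinj (congrFun h j)
  rw [himg, Finset.sum_image hperminj]
  have h1 : permVec H S hS i = ((H.submatrix id c)ᵀ).permanent := by
    rw [Matrix.permanent_transpose]
    simp only [permVec, dif_pos hi]
    rfl
  rw [h1]
  simp only [Matrix.permanent, Matrix.transpose_apply, Matrix.submatrix_apply, id]
  rfl

lemma permVec_nonneg {m n : ℕ} (H : Matrix (Fin m) (Fin n) ℤ)
    (hH : ∀ j i, H j i = 0 ∨ H j i = 1) (S : Finset (Fin n))
    (hS : S.card = m + 1) (i : Fin n) : 0 ≤ permVec H S hS i := by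
  by_cases hi : i ∈ S
  · rw [permVec_eq_sum H S hS hi]
    exact Finset.sum_nonneg fun f _ => pw_nonneg hH f
  · simp [permVec, hi]

theorem stmt5 {m n : ℕ} (hmn : m < n) (H : Matrix (Fin m) (Fin n) ℤ)
    (hH : ∀ j i, H j i = 0 ∨ H j i = 1)
    (S : Finset (Fin n)) (hS : S.card = m + 1) :
    inFundCone H (fun i => ((permVec H S hS i : ℤ) : ℝ)) := by
  constructor
  · intro i
    dsimp only
    exact_mod_cast permVec_nonneg H hH S hS i
  · intro j0 i hji
    have key : permVec H S hS i ≤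
        ∑ i' ∈ (Finset.univ.filter fun i' => H j0 i' = 1).erase i, permVec H S hS i' := by
      set E := (Finset.univ.filter fun i' => H j0 i' = 1).erase i with hE
      by_cases hi : i ∈ S
      · -- restrict RHS sum to E ∩ S
        set E' := E.filter (· ∈ S) with hE'
        have hsub : ∑ i' ∈ E', permVec H S hS i' ≤ ∑ i' ∈ E, permVec H S hS i' :=
          Finset.sum_le_sum_of_subset_of_nonneg (Finset.filter_subset _ _)
            (fun i' _ _ => permVec_nonneg H hH S hS i')
        refine le_trans ?_ hsub
        rw [permVec_eq_sum H S hS hi]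
        have hR : ∑ i' ∈ E', permVec H S hS i' =
            ∑ p ∈ E'.sigma (fun i' => (Bset S i' : Finset (Fin m → Fin n))), pw H p.2 := by
          rw [Finset.sum_sigma]
          exact Finset.sum_congr rfl fun i' hi' =>
            permVec_eq_sum H S hS (Finset.mem_filter.mp hi').2
        rw [hR]
        set F := (Bset S i : Finset (Fin m → Fin n)).filter (fun f => pw H f ≠ 0) with hF
        have hLHS : ∑ f ∈ Bset S i, pw H f = ∑ f ∈ F, pw H f :=
          (Finset.sum_filter_ne_zero _).symm
        rw [hLHS]
        set Φ : (Fin m → Fin n) → ((_ : Fin n) × (Fin m → Fin n)) :=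
          fun f => ⟨f j0, Function.update f j0 i⟩ with hΦ
        -- facts about elements of F
        have hfacts : ∀ f ∈ F, Function.Injective f ∧ (∀ j, f j ∈ S.erase i) ∧
            H j0 (f j0) = 1 := by
          intro f hf
          rw [hF, Finset.mem_filter] at hf
          obtain ⟨hfB, hf0⟩ := hf
          rw [Bset, Finset.mem_filter] at hfB
          obtain ⟨-, hfinj, hfmem⟩ := hfB
          refine ⟨hfinj, hfmem, ?_⟩
          have : H j0 (f j0) ≠ 0 := by
            intro h0
            exact hf0 (Finset.prod_eq_zero (Finset.mem_univ j0) h0)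
          rcases hH j0 (f j0) with h | h
          · exact absurd h this
          · exact h
        have hΦmem : ∀ f ∈ F, Φ f ∈ E'.sigma (fun i' => (Bset S i' : Finset (Fin m → Fin n))) := by
          intro f hf
          obtain ⟨hfinj, hfmem, hfj0⟩ := hfacts f hf
          have hfj0S : f j0 ∈ S.erase i := hfmem j0
          have hfj0ne : f j0 ≠ i := (Finset.mem_erase.mp hfj0S).1
          have hfj0inS : f j0 ∈ S := (Finset.mem_erase.mp hfj0S).2
          simp only [hΦ, Finset.mem_sigma]
          constructor
          · rw [hE', Finset.mem_filter, hE, Finset.mem_erase]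
            exact ⟨⟨hfj0ne, Finset.mem_filter.mpr ⟨Finset.mem_univ _, hfj0⟩⟩, hfj0inS⟩
          · rw [Bset, Finset.mem_filter]
            refine ⟨Finset.mem_univ _, ?_, ?_⟩
            · -- injectivity of the update
              intro a b hab
              simp only [Function.update_apply] at hab
              split_ifs at hab with h1 h2 h2
              · rw [h1, h2]
              · exact absurd hab.symm (Finset.mem_erase.mp (hfmem b)).1
              · exact absurd hab (Finset.mem_erase.mp (hfmem a)).1
              · exact hfinj hab
            · intro j
              rw [Function.update_apply]
              split_ifs with hj
              · exact Finset.mem_erase.mpr ⟨Ne.symm hfj0ne, hi⟩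
              · exact Finset.mem_erase.mpr
                  ⟨fun h => hj (hfinj h), (Finset.mem_erase.mp (hfmem j)).2⟩
        have hΦw : ∀ f ∈ F, pw H (Φ f).2 = pw H f := by
          intro f hf
          obtain ⟨hfinj, hfmem, hfj0⟩ := hfacts f hf
          simp only [hΦ, pw]
          rw [← Finset.mul_prod_erase _ _ (Finset.mem_univ j0),
            ← Finset.mul_prod_erase _ (fun j => H j (f j)) (Finset.mem_univ j0)]
          congr 1
          · rw [Function.update_self, hji, hfj0]
          · exact Finset.prod_congr rfl fun j hj =>
              by rw [Function.update_of_ne (Finset.mem_erase.mp hj).1]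
        have hΦinj : ∀ x ∈ F, ∀ y ∈ F, Φ x = Φ y → x = y := by
          intro x hx y hy h
          have h1 : x j0 = y j0 := congrArg Sigma.fst h
          have h2 : Function.update x j0 i = Function.update y j0 i :=
            eq_of_heq (Sigma.mk.inj_iff.mp h).2
          funext j
          by_cases hj : j = j0
          · rw [hj, h1]
          · have := congrFun h2 j
            rwa [Function.update_of_ne hj, Function.update_of_ne hj] at this
        calc ∑ f ∈ F, pw H f = ∑ p ∈ F.image Φ, pw H p.2 := by
              rw [Finset.sum_image hΦinj]
              exact (Finset.sum_congr rfl hΦw).symm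
          _ ≤ ∑ p ∈ E'.sigma (fun i' => (Bset S i' : Finset (Fin m → Fin n))), pw H p.2 := by
              refine Finset.sum_le_sum_of_subset_of_nonneg ?_
                (fun p _ _ => pw_nonneg hH p.2)
              intro p hp
              obtain ⟨f, hf, rfl⟩ := Finset.mem_image.mp hp
              exact hΦmem f hf
      · have h0 : permVec H S hS i = 0 := by simp [permVec, hi]
        rw [h0]
        exact Finset.sum_nonneg fun i' _ => permVec_nonneg H hH S hS i'
    dsimp only
    exact_mod_cast key
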